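/- With notation as in the previous lattice lemma, suppose additionally B/A = r/s with r, s nonzero integers. Then with M = n²s² + m²r², one has M·γ ∈ b·ℤ, and consequently w = u ∘ F is periodic: w(x + k·(Ma), y + ℓ·b) = w(x, y) for all integers k, ℓ. -/

import Mathlib

/-- In the rational case B/A = r/s, with M = n²s² + m²r² one has Mγ ∈ bℤ, hence
w = u ∘ F is genuinely periodic. -/
theorem stmt6 (A B : ℝ) (hA : A ≠ 0) (hB : B ≠ 0) (n m p q r s : ℤ)
    (hr : r ≠ 0) (hs : s ≠ 0) (hBez : n * q - m * p = 1)
    (hrat : B / A = (r : ℝ) / (s : ℝ)) :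
    let b : ℝ := Real.sqrt ((n : ℝ)^2 * A^2 + (m : ℝ)^2 * B^2)
    let a : ℝ := A * B / b
    let γ : ℝ := -((p : ℝ) * n * A^2 + (q : ℝ) * m * B^2) / b
    let M : ℤ := n^2 * s^2 + m^2 * r^2
    let Xi0 : ℝ × ℝ := ((n * A) / b, (m * B) / b)
    let Xi0p : ℝ × ℝ := ((-(m * B)) / b, (n * A) / b)
    let F : ℝ × ℝ → ℝ × ℝ := fun z => z.1 • Xi0p + z.2 • Xi0
    (∃ K : ℤ, (M : ℝ) * γ = (K : ℝ) * b) ∧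
    (∀ u : ℝ × ℝ → ℂ,
        (∀ (z : ℝ × ℝ) (P Q : ℤ), u (z + ((P : ℝ) * A, (Q : ℝ) * B)) = u z) →
        ∀ (x y : ℝ) (k l : ℤ),
          (u ∘ F) (x + k * ((M : ℝ) * a), y + l * b) = (u ∘ F) (x, y)) := by
  intro b a γ M Xi0 Xi0p F
  have hb2 : (0:ℝ) < (n : ℝ)^2 * A^2 + (m : ℝ)^2 * B^2 := by
    rcases eq_or_ne n 0 with hn | hn
    · have hm : m ≠ 0 := by rintro rfl; simp [hn] at hBez
      have hm' : (m:ℝ) ≠ 0 := Int.cast_ne_zero.mpr hm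
      positivity
    · have hn' : (n:ℝ) ≠ 0 := Int.cast_ne_zero.mpr hn
      positivity
  have hb : b ≠ 0 := ne_of_gt (Real.sqrt_pos.mpr hb2)
  have hbb : b * b = (n : ℝ)^2 * A^2 + (m : ℝ)^2 * B^2 := Real.mul_self_sqrt hb2.le
  have hs' : (s:ℝ) ≠ 0 := Int.cast_ne_zero.mpr hs
  have hsB : (s:ℝ) * B = (r:ℝ) * A := by
    field_simp at hrat
    linarith [hrat]
  have h2 : (s:ℝ)^2 * B^2 = (r:ℝ)^2 * A^2 := by
    linear_combination ((s:ℝ)*B + (r:ℝ)*A) * hsB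
  constructor
  · refine ⟨-(p*n*s^2 + q*m*r^2), ?_⟩
    show (M:ℝ) * (-((p : ℝ) * n * A^2 + (q : ℝ) * m * B^2) / b) = _
    rw [mul_div_assoc', div_eq_iff hb]
    simp only [M]
    push_cast
    linear_combination ((p:ℝ)*n*s^2 + q*m*r^2) * hbb + ((p:ℝ)*n*m^2 - (q:ℝ)*m*n^2) * h2
  · intro u hu x y k l
    have key : F (x + ↑k * (↑M * a), y + ↑l * b) =
        F (x, y) + (((l*n - k*m*r^2 : ℤ) : ℝ) * A, ((k*n*s^2 + l*m : ℤ) : ℝ) * B) := by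
      simp only [F, Xi0, Xi0p, a, M, Prod.smul_mk, smul_eq_mul, Prod.mk_add_mk, Prod.mk.injEq]
      constructor
      · push_cast
        field_simp
        linear_combination ((k:ℝ)*m*r^2*A) * hbb + (-((k:ℝ)*m*n^2*A)) * h2
      · push_cast
        field_simp
        linear_combination (-((k:ℝ)*n*s^2*B)) * hbb + (-((k:ℝ)*n*m^2*B)) * h2
    simp only [Function.comp_apply, key]
    exact hu (F (x, y)) (l*n - k*m*r^2) (k*n*s^2 + l*m)
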